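/- arXiv:2407.18599 — 2 statements merged into one kernel-verified Lean document; each statement's English description precedes it below -/
import Mathlib

section
/- Let Σ be a finite alphabet with |Σ| = σ ≥ 2 and let w be a word over Σ with alph(w) = Σ and |w| = ι(w)·σ. Then for all s ∈ [σ] and all j ∈ [|w|] such that either j mod σ = 0 or s ≤ σ − (j mod σ), if j + s ≤ |w| then nextAlphPos_w(j, s) = j + s. -/
open List

universe u
variable {α : Type u}

/-- `ScatFact k w` is the set of scattered factors (subsequences) of `w` of length exactly `k`. -/
def ScatFact (k : ℕ) (w : List α) : Set (List α) :=
  {v | v.length = k ∧ v.Sublist w}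

/-- `w` is `k`-universal over the alphabet `S`: every word of length `k` over `S`
is a scattered factor of `w`. -/
def IsKUniversal [DecidableEq α] (S : Finset α) (k : ℕ) (w : List α) : Prop :=
  ∀ v : List α, v.length = k → (∀ x ∈ v, x ∈ S) → v.Sublist w

/-- The universality index of `w` over the alphabet `S`: the largest `k` such that
`w` is `k`-universal over `S`. -/
noncomputable def univIdx [DecidableEq α] (S : Finset α) (w : List α) : ℕ :=
  sSup {k | IsKUniversal S k w}

/-- `IsArchFact S w inners modus rest` says that `w` has the arch factorization
`w = ar_1 ⋯ ar_n · rest` over the alphabet `S`, where the `i`-th arch is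
`ar_i = inners[i] ++ [modus[i]]`: each arch contains every letter of `S`,
the last letter of each arch occurs only once within the arch, and the
alphabet of the rest is a proper subset of `S`. -/
def IsArchFact [DecidableEq α] (S : Finset α) (w : List α)
    (inners : List (List α)) (modus : List α) (rest : List α) : Prop :=
  inners.length = modus.length ∧
  w = (List.zipWith (fun inn m => inn ++ [m]) inners modus).flatten ++ rest ∧
  (∀ p ∈ List.zip inners modus, ∀ x ∈ S, x ∈ p.1 ++ [p.2]) ∧
  (∀ p ∈ List.zip inners modus, p.2 ∉ p.1) ∧
  rest.toFinset ⊂ S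

/-- `v` is perfect `k`-universal over `S`: `alph(v) = S`, the universality index of `v`
over `S` is `k`, and the rest of its arch factorization over `S` is empty. -/
def IsPerfectUniv [DecidableEq α] (S : Finset α) (k : ℕ) (v : List α) : Prop :=
  v.toFinset = S ∧ univIdx S v = k ∧ ∃ inners modus, IsArchFact S v inners modus []

/-- `v` is minimal perfect `k`-universal over `S`. -/
def IsMinPerfectUniv [DecidableEq α] (S : Finset α) (k : ℕ) (v : List α) : Prop :=
  IsPerfectUniv S k v ∧ ∀ v' : List α, IsPerfectUniv S k v' → v.length ≤ v'.length

/-- `nextAlphPos w i s` (positions `1`-indexed): the least position `j` such that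
`w[i+1..j]` contains exactly `s` distinct letters, or `none` (representing `-1`)
if `w[i+1..|w|]` contains fewer than `s` distinct letters. -/
noncomputable def nextAlphPos [DecidableEq α] (w : List α) (i s : ℕ) : Option ℕ :=
  if (w.drop i).toFinset.card < s then none
  else some (sInf {j | ((w.drop i).take (j - i)).toFinset.card = s})

/-- The letter of `w` at (1-indexed) position `j`. -/
def letterAt [Inhabited α] (w : List α) (j : ℕ) : α := w.getD (j - 1) default

/-- The word over `Fin σ` with `ι` arches, whose first arch is `a_1 a_2 ⋯ a_σ`
and each later arch is the reverse of the previous one. -/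
def wmin (σ ι : ℕ) : List (Fin σ) :=
  ((List.range ι).map (fun i =>
    if i % 2 = 0 then List.finRange σ else (List.finRange σ).reverse)).flatten

def posAfter [DecidableEq α] (a : α) : ℕ → List α → ℕ
  | 0, _ => 0
  | _+1, [] => 0
  | m+1, c :: w => if c = a then posAfter a m w + 1 else posAfter a (m+1) w + 1

theorem sublist_drop_posAfter [DecidableEq α] (a : α) :
    ∀ (w : List α) (m : ℕ) (u : List α),
      (List.replicate m a ++ u) <+ w → u <+ w.drop (posAfter a m w) := by
  intro w
  induction w with
  | nil =>
    intro m u h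
    have := List.sublist_nil.mp h
    rcases List.append_eq_nil_iff.mp this with ⟨-, rfl⟩
    simp
  | cons c w ih =>
    intro m u h
    cases m with
    | zero => simpa [posAfter] using h
    | succ m =>
      rw [List.replicate_succ] at h
      by_cases hc : c = a
      · subst hc
        have h' : List.replicate m c ++ u <+ w := by
          simpa using List.cons_sublist_cons.mp h
        have := ih m u h'
        simpa [posAfter] using this
      · have h' : a :: (List.replicate m a ++ u) <+ w := by
          cases h with
          | cons _ h => exact h
          | cons_cons _ h => exact absurd rfl hc
        have := ih (m+1) u (by rw [List.replicate_succ]; exact h')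
        simpa [posAfter, hc] using this

theorem lt_posAfter [DecidableEq α] (a : α) :
    ∀ (w : List α) (m t : ℕ), m ≤ w.count a → (w.take t).count a < m →
      t < posAfter a m w := by
  intro w
  induction w with
  | nil => intro m t hm ht; simp at hm; omega
  | cons c w ih =>
    intro m t hm ht
    cases m with
    | zero => omega
    | succ m =>
      cases t with
      | zero => simp only [posAfter]; split <;> omega
      | succ t =>
        rw [List.take_succ_cons] at ht
        by_cases hc : c = a
        · subst hc
          simp only [List.count_cons_self] at ht hm
          have h1 := ih m t (by omega) (by omega)
          have h2 : posAfter c (m+1) (c :: w) = posAfter c m w + 1 := by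
            simp [posAfter]
          omega
        · simp only [List.count_cons_of_ne hc] at ht hm
          have h1 := ih (m+1) t hm ht
          have h2 : posAfter a (m+1) (c :: w) = posAfter a (m+1) w + 1 := by
            simp [posAfter, hc]
          omega

theorem sum_count_univ [Fintype α] [DecidableEq α] (w : List α) :
    ∑ c : α, w.count c = w.length := by
  induction w with
  | nil => simp
  | cons x w ih =>
    simp only [List.count_cons, List.length_cons]
    rw [Finset.sum_add_distrib, ih]
    simp [Finset.sum_ite_eq]

theorem univ_len_lower [Fintype α] [DecidableEq α] {k : ℕ} {w : List α}
    (h : IsKUniversal Finset.univ k w) : k * Fintype.card α ≤ w.length := by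
  have hc : ∀ c : α, k ≤ w.count c := by
    intro c
    have hsub : List.replicate k c <+ w :=
      h _ List.length_replicate (by intro x _; exact Finset.mem_univ x)
    have := hsub.count_le c
    simpa using this
  calc k * Fintype.card α = ∑ _c : α, k := by
        rw [Finset.sum_const, Finset.card_univ, smul_eq_mul, mul_comm]
      _ ≤ ∑ c : α, w.count c := Finset.sum_le_sum (fun c _ => hc c)
      _ = w.length := sum_count_univ w

theorem count_take_eq [Fintype α] [DecidableEq α] {w : List α} {ι : ℕ}
    (hU : IsKUniversal Finset.univ ι w)
    (hlen : w.length = ι * Fintype.card α) (hσpos : 0 < Fintype.card α)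
    {m : ℕ} (hm : m ≤ ι) (a : α) :
    (w.take (m * Fintype.card α)).count a = m := by
  set σ := Fintype.card α with hσ

  -- step 1 : every letter occurs at least ι times
  have hcw : ∀ c : α, ι ≤ w.count c := by
    intro c
    have hsub : List.replicate ι c <+ w :=
      hU _ List.length_replicate (by intro x _; exact Finset.mem_univ x)
    simpa using hsub.count_le c
  -- step 2 : lower bound for every letter
  have hlow : ∀ c : α, m ≤ (w.take (m * σ)).count c := by
    intro c
    rcases eq_or_lt_of_le hm with heq | hlt
    · subst heq
      have : w.take (m * σ) = w := by rw [← hlen]; exact List.take_length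
      rw [this]; exact hcw c
    · by_contra hcon
      push_neg at hcon
      have hpos : m * σ < posAfter c m w :=
        lt_posAfter c w m (m * σ) (le_trans hm (hcw c)) hcon
      have hU2 : IsKUniversal Finset.univ (ι - m) (w.drop (posAfter c m w)) := by
        intro u hu _
        have hsub : List.replicate m c ++ u <+ w := by
          apply hU
          · rw [List.length_append, List.length_replicate, hu]; omega
          · intro x _; exact Finset.mem_univ x
        exact sublist_drop_posAfter c w m u hsub
      have hlow2 := univ_len_lower hU2
      rw [List.length_drop, hlen, ← hσ] at hlow2
      have h1 : (ι - m) * σ = ι * σ - m * σ := Nat.sub_mul ι m σ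
      have h2 : σ ≤ (ι - m) * σ := by
        calc σ = 1 * σ := (one_mul σ).symm
          _ ≤ (ι - m) * σ := Nat.mul_le_mul_right σ (by omega)
      have h3 : m * σ ≤ ι * σ := Nat.mul_le_mul_right σ hm
      omega
  -- step 3 : sum of counts equals length
  have hsum : ∑ c : α, (w.take (m * σ)).count c = m * σ := by
    rw [sum_count_univ, List.length_take, hlen]
    have : m * σ ≤ ι * σ := Nat.mul_le_mul_right σ hm
    omega
  -- step 4 : upper bound by contradiction
  by_contra hne
  have hgt : m < (w.take (m * σ)).count a := lt_of_le_of_ne (hlow a) (Ne.symm hne)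
  have : ∑ _c : α, m < ∑ c : α, (w.take (m * σ)).count c :=
    Finset.sum_lt_sum (fun c _ => hlow c) ⟨a, Finset.mem_univ a, hgt⟩
  rw [hsum, Finset.sum_const, Finset.card_univ, smul_eq_mul, mul_comm, ← hσ] at this
  omega

theorem stmt16 {α : Type u} [Fintype α] [DecidableEq α]
    (hsigma : 2 ≤ Fintype.card α) (w : List α) (halph : ∀ a : α, a ∈ w)
    (hlen : w.length = univIdx Finset.univ w * Fintype.card α)
    (s j : ℕ) (hs1 : 1 ≤ s) (hs2 : s ≤ Fintype.card α)
    (hj1 : 1 ≤ j) (hj2 : j ≤ w.length)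
    (hcase : j % Fintype.card α = 0 ∨ s ≤ Fintype.card α - j % Fintype.card α)
    (hjs : j + s ≤ w.length) :
    nextAlphPos w j s = some (j + s) := by
    classical
  set σ := Fintype.card α with hσ
  set ι := univIdx Finset.univ w with hι
  have hσ2 : 0 < σ := by omega
  have h0 : IsKUniversal Finset.univ 0 w := by
    intro v hv _
    rw [List.length_eq_zero_iff] at hv
    subst hv
    exact List.nil_sublist w
  have hbdd : BddAbove {k | IsKUniversal Finset.univ k w} := by
    refine ⟨w.length, fun k hk => ?_⟩
    have h1 := univ_len_lower hk
    have h2 : k ≤ k * σ := Nat.le_mul_of_pos_right k hσ2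
    rw [← hσ] at h1
    omega
  have hU : IsKUniversal Finset.univ ι w := by
    rw [hι]
    exact Nat.sSup_mem ⟨0, h0⟩ hbdd
  set m := j / σ with hm
  set r := j % σ with hr
  have hjmr : j = m * σ + r := by
    rw [hm, hr, Nat.mul_comm]
    exact (Nat.div_add_mod j σ).symm
  have hrσ : r < σ := Nat.mod_lt j hσ2
  have hrs : r + s ≤ σ := by rcases hcase with h | h <;> omega
  rw [hlen] at hjs hj2
  have hmι : m < ι := by
    by_contra hcon
    push_neg at hcon
    have : ι * σ ≤ m * σ := Nat.mul_le_mul_right σ hcon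
    omega
  set B := (w.drop (m * σ)).take σ with hB
  have hcount : ∀ a : α, B.count a = 1 := by
    intro a
    have h1 := count_take_eq hU hlen hσ2 (show m + 1 ≤ ι by omega) a
    have h2 := count_take_eq hU hlen hσ2 (le_of_lt hmι) a
    rw [← hσ] at h1 h2
    rw [show (m + 1) * σ = m * σ + σ by ring, List.take_add, List.count_append] at h1
    rw [← hB] at h1
    omega
  have hnd : B.Nodup := List.nodup_iff_count_le_one.mpr (fun a => le_of_eq (hcount a))
  have hseg : (w.drop j).take s = ((B.drop r).take s) := by
    rw [hB, List.drop_take, List.take_take, List.drop_drop]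
    rw [Nat.min_eq_left (by omega : s ≤ σ - r), ← hjmr]
  have hsegnd : ((w.drop j).take s).Nodup := by
    rw [hseg]
    exact hnd.sublist ((List.take_sublist s _).trans (List.drop_sublist r B))
  have hseglen : ((w.drop j).take s).length = s := by
    rw [List.length_take, List.length_drop]
    omega
  have hcard : ((w.drop j).take s).toFinset.card = s := by
    rw [List.toFinset_card_of_nodup hsegnd, hseglen]
  have hnot : ¬ (w.drop j).toFinset.card < s := by
    push_neg
    calc s = ((w.drop j).take s).toFinset.card := hcard.symm
      _ ≤ (w.drop j).toFinset.card := by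
          apply Finset.card_le_card
          intro x hx
          rw [List.mem_toFinset] at hx ⊢
          exact (List.take_sublist s _).subset hx
  have hmem : (j + s) ∈ {j' | ((w.drop j).take (j' - j)).toFinset.card = s} := by
    simp only [Set.mem_setOf_eq, Nat.add_sub_cancel_left]
    exact hcard
  unfold nextAlphPos
  rw [if_neg hnot, Option.some.injEq]
  apply Nat.le_antisymm
  · exact Nat.sInf_le hmem
  · apply le_csInf ⟨_, hmem⟩
    intro b hb
    simp only [Set.mem_setOf_eq] at hb
    have h1 : ((w.drop j).take (b - j)).toFinset.card ≤ b - j :=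
      le_trans (List.toFinset_card_le _) (by rw [List.length_take]; exact min_le_left _ _)
    omega
end

section
/- Let Σ = {a_1, …, a_σ} be a finite alphabet with σ ≥ 2, let ι ≥ 1, and let w_min be the word of length ι·σ whose first arch is ar_1(w_min) = a_1 a_2 ⋯ a_σ and whose i-th arch is the reverse of its (i−1)-th arch for all 2 ≤ i ≤ ι. Then for each s ∈ [σ] and j ∈ [|w_min|], writing r = j mod σ: nextAlphPos_{w_min}(j, s) = j + s if r = 0 or s ≤ σ − r (and j + s ≤ |w_min|); nextAlphPos_{w_min}(j, s) = ⌊j/σ⌋·σ + σ + s if r ≠ 0, ⌊j/σ⌋ + 1 < ι, and s > σ − r; and nextAlphPos_{w_min}(j, s) = −1 otherwise. -/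
open List

universe u
variable {α : Type u}

namespace Stmt17Aux

def Bl (σ i : ℕ) : List (Fin σ) :=
  if i % 2 = 0 then List.finRange σ else (List.finRange σ).reverse

lemma Bl_length (σ i : ℕ) : (Bl σ i).length = σ := by
  unfold Bl; split <;> simp

lemma Bl_nodup (σ i : ℕ) : (Bl σ i).Nodup := by
  unfold Bl; split
  · exact List.nodup_finRange σ
  · exact (List.nodup_reverse).mpr (List.nodup_finRange σ)

lemma Bl_succ (σ i : ℕ) : Bl σ (i+1) = (Bl σ i).reverse := by
  unfold Bl
  rcases Nat.mod_two_eq_zero_or_one i with h | h <;>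
    simp [Nat.add_mod, h]

lemma wmin_eq (σ ι : ℕ) : wmin σ ι = ((List.range ι).map (Bl σ)).flatten := rfl

lemma wmin_length (σ ι : ℕ) : (wmin σ ι).length = ι * σ := by
  rw [wmin_eq, List.length_flatten, List.map_map]
  have h : (List.range ι).map (List.length ∘ Bl σ) = List.replicate ι σ := by
    rw [List.eq_replicate_iff]
    constructor
    · simp
    · intro b hb
      simp only [List.mem_map] at hb
      obtain ⟨a, -, ha⟩ := hb
      rw [← ha]; exact Bl_length σ a
  rw [h, List.sum_replicate, smul_eq_mul]

lemma drop_wmin (σ ι q : ℕ) (hq : q ≤ ι) :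
    (wmin σ ι).drop (q * σ) = ((List.range' q (ι - q)).map (Bl σ)).flatten := by
  have h1 : List.range q ++ List.range' q (ι - q) = List.range ι := by
    rw [List.range_eq_range', List.range_eq_range']
    have h := List.range'_append (s := 0) (m := q) (n := ι - q) (step := 1)
    simpa [Nat.sub_add_cancel hq, Nat.add_sub_cancel' hq] using h
  rw [wmin_eq, ← h1, List.map_append, List.flatten_append]
  have hlen : (((List.range q).map (Bl σ)).flatten).length = q * σ := by
    rw [← wmin_eq]; exact wmin_length σ q
  rw [← hlen, List.drop_left]

lemma wmin_drop_struct (σ ι q r : ℕ) (hq : q < ι) (hr : r ≤ σ) :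
    (wmin σ ι).drop (q * σ + r) =
      (Bl σ q).drop r ++ ((List.range' (q+1) (ι - q - 1)).map (Bl σ)).flatten := by
  rw [← List.drop_drop, drop_wmin σ ι q hq.le]
  have h2 : ι - q = (ι - q - 1) + 1 := by omega
  rw [h2, List.range'_succ, List.map_cons, List.flatten_cons,
    List.drop_append, Bl_length,
    Nat.sub_eq_zero_of_le hr, List.drop_zero]
  simp

lemma card_take_small (σ ι q r n : ℕ) (hq : q < ι) (hr : r ≤ σ) (hn : n ≤ σ - r) :
    (((wmin σ ι).drop (q * σ + r)).take n).toFinset.card = n := by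
  rw [wmin_drop_struct σ ι q r hq hr, List.take_append]
  have hlen : ((Bl σ q).drop r).length = σ - r := by
    rw [List.length_drop, Bl_length]
  rw [hlen, Nat.sub_eq_zero_of_le hn, List.take_zero, List.append_nil]
  have hnd : (((Bl σ q).drop r).take n).Nodup :=
    ((List.take_sublist _ _).trans (List.drop_sublist _ _)).nodup (Bl_nodup σ q)
  rw [List.toFinset_card_of_nodup hnd, List.length_take, hlen]
  omega

lemma card_take_two (σ ι q r m : ℕ) (hq : q + 1 < ι) (hr : r ≤ σ)
    (hm1 : σ - r ≤ m) (hm2 : m ≤ σ) :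
    (((wmin σ ι).drop (q * σ + r)).take (σ - r + m)).toFinset.card = m := by
  rw [wmin_drop_struct σ ι q r (by omega) hr]
  have h2 : ι - q - 1 = (ι - q - 2) + 1 := by omega
  rw [h2, List.range'_succ, List.map_cons, List.flatten_cons]
  have hlen : ((Bl σ q).drop r).length = σ - r := by
    rw [List.length_drop, Bl_length]
  rw [List.take_append, hlen, List.take_of_length_le (by omega : ((Bl σ q).drop r).length ≤ σ - r + m)]
  rw [Nat.add_sub_cancel_left]
  rw [List.take_append, Bl_length, Nat.sub_eq_zero_of_le hm2,
    List.take_zero, List.append_nil]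
  have hrev : (Bl σ (q+1)).take m = ((Bl σ q).drop (σ - m)).reverse := by
    rw [Bl_succ, List.take_reverse, Bl_length]
  rw [hrev, List.toFinset_append, List.toFinset_reverse]
  have hsub : ((Bl σ q).drop r).toFinset ⊆ ((Bl σ q).drop (σ - m)).toFinset := by
    intro x hx
    rw [List.mem_toFinset] at hx ⊢
    have : (Bl σ q).drop r = ((Bl σ q).drop (σ - m)).drop (r - (σ - m)) := by
      rw [List.drop_drop]
      congr 1
      omega
    rw [this] at hx
    exact (List.drop_sublist _ _).subset hx
  rw [Finset.union_eq_right.mpr hsub]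
  have hnd : ((Bl σ q).drop (σ - m)).Nodup :=
    (List.drop_sublist _ _).nodup (Bl_nodup σ q)
  rw [List.toFinset_card_of_nodup hnd, List.length_drop, Bl_length]
  omega

lemma card_take_mono {α : Type*} [DecidableEq α] (l : List α) {n m : ℕ} (hnm : n ≤ m) :
    (l.take n).toFinset.card ≤ (l.take m).toFinset.card := by
  apply Finset.card_le_card
  intro x hx
  rw [List.mem_toFinset] at hx ⊢
  have : l.take n = (l.take m).take n := by
    rw [List.take_take, min_eq_left hnm]
  rw [this] at hx
  exact (List.take_sublist _ _).subset hx

end Stmt17Aux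

open Stmt17Aux in
theorem stmt17 (sigma iota : ℕ) (hsigma : 2 ≤ sigma) (hiota : 1 ≤ iota)
    (s j : ℕ) (hs1 : 1 ≤ s) (hs2 : s ≤ sigma)
    (hj1 : 1 ≤ j) (hj2 : j ≤ (wmin sigma iota).length) :
    ((j % sigma = 0 ∨ s ≤ sigma - j % sigma) ∧ j + s ≤ (wmin sigma iota).length →
        nextAlphPos (wmin sigma iota) j s = some (j + s)) ∧
    (j % sigma ≠ 0 ∧ j / sigma + 1 < iota ∧ sigma - j % sigma < s →
        nextAlphPos (wmin sigma iota) j s = some (j / sigma * sigma + sigma + s)) ∧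
    (¬ ((j % sigma = 0 ∨ s ≤ sigma - j % sigma) ∧ j + s ≤ (wmin sigma iota).length) →
      ¬ (j % sigma ≠ 0 ∧ j / sigma + 1 < iota ∧ sigma - j % sigma < s) →
        nextAlphPos (wmin sigma iota) j s = none) := by
  have hσ : 0 < sigma := by omega
  set q := j / sigma with hqdef
  set r := j % sigma with hrdef
  have hrs : r < sigma := Nat.mod_lt j hσ
  have hqr : q * sigma + r = j := by
    rw [hqdef, hrdef, Nat.mul_comm]
    exact Nat.div_add_mod j sigma
  have hL : (wmin sigma iota).length = iota * sigma := wmin_length sigma iota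
  rw [hL] at hj2 ⊢
  have hmul1 : (q + 1) * sigma = q * sigma + sigma := by ring
  -- generic subset fact
  have subfact : ∀ (n : ℕ) (l : List (Fin sigma)),
      (l.take n).toFinset ⊆ l.toFinset := by
    intro n l x hx
    rw [List.mem_toFinset] at hx ⊢
    exact (List.take_sublist _ _).subset hx
  refine ⟨?_, ?_, ?_⟩
  · rintro ⟨hA, hB⟩
    have hq : q < iota := by
      rw [hqdef, Nat.div_lt_iff_lt_mul hσ]
      omega
    have hsr : s ≤ sigma - r := by
      rcases hA with h | h <;> omega
    have hcard : (((wmin sigma iota).drop j).take s).toFinset.card = s := by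
      rw [← hqr]
      exact card_take_small sigma iota q r s hq hrs.le hsr
    rw [nextAlphPos, if_neg]
    · congr 1
      apply _root_.le_antisymm
      · apply Nat.sInf_le
        show (((wmin sigma iota).drop j).take (j + s - j)).toFinset.card = s
        rw [show j + s - j = s by omega]
        exact hcard
      · apply le_csInf
        · exact ⟨j + s, by
            show (((wmin sigma iota).drop j).take (j + s - j)).toFinset.card = s
            rw [show j + s - j = s by omega]; exact hcard⟩
        · intro k hk
          have hk' : (((wmin sigma iota).drop j).take (k - j)).toFinset.card = s := hk
          have h1 : s ≤ (((wmin sigma iota).drop j).take (k - j)).length := by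
            rw [← hk']; exact List.toFinset_card_le _
          have h2 : (((wmin sigma iota).drop j).take (k - j)).length ≤ k - j :=
            List.length_take_le _ _
          omega
    · push_neg
      calc s = (((wmin sigma iota).drop j).take s).toFinset.card := hcard.symm
        _ ≤ ((wmin sigma iota).drop j).toFinset.card :=
            Finset.card_le_card (subfact _ _)
  · rintro ⟨h1, h2, h3⟩
    have hv2 : q * sigma + sigma + s = j + (sigma - r + s) := by omega
    have hcard : (((wmin sigma iota).drop j).take (sigma - r + s)).toFinset.card = s := by
      rw [← hqr]
      exact card_take_two sigma iota q r s h2 hrs.le (by omega) hs2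
    have hcard' : (((wmin sigma iota).drop j).take (sigma - r + (s-1))).toFinset.card = s - 1 := by
      rw [← hqr]
      exact card_take_two sigma iota q r (s-1) h2 hrs.le (by omega) (by omega)
    rw [nextAlphPos, if_neg]
    · congr 1
      apply _root_.le_antisymm
      · apply Nat.sInf_le
        show (((wmin sigma iota).drop j).take (q * sigma + sigma + s - j)).toFinset.card = s
        rw [show q * sigma + sigma + s - j = sigma - r + s by omega]
        exact hcard
      · apply le_csInf
        · exact ⟨q * sigma + sigma + s, by
            show (((wmin sigma iota).drop j).take (q * sigma + sigma + s - j)).toFinset.card = s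
            rw [show q * sigma + sigma + s - j = sigma - r + s by omega]; exact hcard⟩
        · intro k hk
          have hk' : (((wmin sigma iota).drop j).take (k - j)).toFinset.card = s := hk
          by_contra hcon
          push_neg at hcon
          have hkj : k - j ≤ sigma - r + (s - 1) := by omega
          have := card_take_mono ((wmin sigma iota).drop j) hkj
          rw [hk', hcard'] at this
          omega
    · push_neg
      calc s = (((wmin sigma iota).drop j).take (sigma - r + s)).toFinset.card := hcard.symm
        _ ≤ ((wmin sigma iota).drop j).toFinset.card :=
            Finset.card_le_card (subfact _ _)
  · intro hn1 hn2
    rw [nextAlphPos, if_pos]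
    have hlen : ((wmin sigma iota).drop j).length = iota * sigma - j := by
      rw [List.length_drop, hL]
    have hcle : ((wmin sigma iota).drop j).toFinset.card ≤ iota * sigma - j := by
      rw [← hlen]; exact List.toFinset_card_le _
    have key : iota * sigma - j < s := by
      by_cases hB : j + s ≤ iota * sigma
      · push_neg at hn1
        have hA := hn1
        rcases Classical.em (r = 0 ∨ s ≤ sigma - r) with h | h
        · have := hA h
          omega
        push_neg at h
        obtain ⟨hr0, hsr⟩ := h
        have hq : q < iota := by
          rw [hqdef, Nat.div_lt_iff_lt_mul hσ]
          omega
        have hq1 : ¬ (q + 1 < iota) := fun hc => hn2 ⟨hr0, hc, hsr⟩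
        have hiq : iota = q + 1 := by omega
        have : iota * sigma = q * sigma + sigma := by rw [hiq]; ring
        omega
      · omega
    omega
end
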